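/- Let 0 < β₁ < β₂ and let a be the unique positive zero of F_{β₁,β₂}, and set φ(τ) := (aβ₁ − 1)(e^{aτ} − 1)/a² + τ/a. Then the Gaussian curvature K(τ) := −φ''(τ) equals (1 − aβ₁)·e^{aτ}; it is strictly positive and strictly increasing on [0, β₁+β₂], and its supremum over [0, β₁+β₂] equals 1 + aβ₂. -/

import Mathlib

/-- Hamilton football angle function: `F β₁ β₂ x = β₁x − 1 + (β₂x + 1) e^{−x(β₁+β₂)}`. -/
noncomputable def F (β₁ β₂ x : ℝ) : ℝ :=
  β₁ * x - 1 + (β₂ * x + 1) * Real.exp (-x * (β₁ + β₂))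

/-- With `a ∈ (0,1/β₁)` the unique positive zero of `F_{β₁,β₂}` and
`φ(τ) = (aβ₁−1)(e^{aτ}−1)/a² + τ/a`, the Gaussian curvature `K(τ) = −φ''(τ)` equals
`(1−aβ₁)e^{aτ}`; it is strictly positive and strictly increasing on `[0, β₁+β₂]`, and its
supremum there equals `1 + aβ₂`. -/
theorem gaussian_curvature (β₁ β₂ a : ℝ) (h₁ : 0 < β₁) (h₂ : β₁ < β₂)
    (ha : 0 < a) (ha' : a < 1 / β₁) (hz : F β₁ β₂ a = 0)
    (huniq : ∀ y : ℝ, 0 < y → F β₁ β₂ y = 0 → y = a)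
    (φ : ℝ → ℝ)
    (hφ : ∀ τ, φ τ = (a * β₁ - 1) * (Real.exp (a * τ) - 1) / a ^ 2 + τ / a) :
    (∀ τ : ℝ, -(deriv (deriv φ) τ) = (1 - a * β₁) * Real.exp (a * τ)) ∧
    (∀ τ ∈ Set.Icc (0 : ℝ) (β₁ + β₂), 0 < -(deriv (deriv φ) τ)) ∧
    StrictMonoOn (fun τ => -(deriv (deriv φ) τ)) (Set.Icc (0 : ℝ) (β₁ + β₂)) ∧
    IsGreatest ((fun τ => -(deriv (deriv φ) τ)) '' Set.Icc (0 : ℝ) (β₁ + β₂))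
      (1 + a * β₂) := by
  have ha0 : a ≠ 0 := ne_of_gt ha
  have hexp : ∀ τ : ℝ, HasDerivAt (fun t : ℝ => Real.exp (a * t)) (a * Real.exp (a * τ)) τ := by
    intro τ
    have h := (Real.hasDerivAt_exp (a * τ)).comp τ ((hasDerivAt_id τ).const_mul a)
    exact h.congr_deriv (by ring)
  have hd1 : deriv φ = fun τ => (a * β₁ - 1) * Real.exp (a * τ) / a + 1 / a := by
    funext τ
    have hφ' : φ = fun τ => (a * β₁ - 1) * (Real.exp (a * τ) - 1) / a ^ 2 + τ / a :=
      funext hφ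
    have h : HasDerivAt φ ((a * β₁ - 1) * Real.exp (a * τ) / a + 1 / a) τ := by
      rw [hφ']
      have h1 := ((((hexp τ).sub_const 1).const_mul (a * β₁ - 1)).div_const (a ^ 2)).add
        ((hasDerivAt_id τ).div_const a)
      refine h1.congr_deriv ?_
      field_simp
    exact h.deriv
  have hd2 : ∀ τ, deriv (deriv φ) τ = (a * β₁ - 1) * Real.exp (a * τ) := by
    intro τ
    rw [hd1]
    have h : HasDerivAt (fun τ => (a * β₁ - 1) * Real.exp (a * τ) / a + 1 / a)
        ((a * β₁ - 1) * Real.exp (a * τ)) τ := by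
      have h1 := (((hexp τ).const_mul (a * β₁ - 1)).div_const a).add_const (1 / a)
      refine h1.congr_deriv ?_
      field_simp
    exact h.deriv
  have hK : ∀ τ : ℝ, -(deriv (deriv φ) τ) = (1 - a * β₁) * Real.exp (a * τ) := by
    intro τ; rw [hd2]; ring
  have hpos : 0 < 1 - a * β₁ := by
    have : a * β₁ < 1 := by
      have := (lt_div_iff₀ h₁).mp ha'
      linarith
    linarith
  -- key identity
  have hkey : (1 - a * β₁) * Real.exp (a * (β₁ + β₂)) = 1 + a * β₂ := by
    have hz' : β₁ * a - 1 + (β₂ * a + 1) * Real.exp (-a * (β₁ + β₂)) = 0 := hz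
    have he : Real.exp (-a * (β₁ + β₂)) = (Real.exp (a * (β₁ + β₂)))⁻¹ := by
      rw [← Real.exp_neg]; ring_nf
    rw [he] at hz'
    have hepos : Real.exp (a * (β₁ + β₂)) ≠ 0 := (Real.exp_pos _).ne'
    field_simp at hz'
    nlinarith [hz']
  refine ⟨hK, ?_, ?_, ?_⟩
  · intro τ _
    rw [hK]
    exact mul_pos hpos (Real.exp_pos _)
  · intro x hx y hy hxy
    simp only [hK]
    have : Real.exp (a * x) < Real.exp (a * y) :=
      Real.exp_lt_exp.mpr (by nlinarith)
    exact mul_lt_mul_of_pos_left this hpos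
  · constructor
    · refine ⟨β₁ + β₂, ⟨by linarith, le_refl _⟩, ?_⟩
      show -(deriv (deriv φ) (β₁ + β₂)) = _
      rw [hK, hkey]
    · rintro v ⟨τ, hτ, rfl⟩
      simp only [hK]
      rw [← hkey]
      have : Real.exp (a * τ) ≤ Real.exp (a * (β₁ + β₂)) :=
        Real.exp_le_exp.mpr (by nlinarith [hτ.2])
      exact mul_le_mul_of_nonneg_left this hpos.le
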